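/- Let k be a field and C a k-linear category equipped with a finite complete set of primitive orthogonal idempotents 𝓘. Then the category of k-linear contravariant functors from C to finite-dimensional k-vector spaces is semisimple and Schurian, and the presheaves (X_ε, ε)^♯ for ε ∈ 𝓘 form a complete set of simples in it (they are pairwise non-isomorphic simple objects, and every simple k-linear presheaf is isomorphic to one of them). -/

import Mathlib

open CategoryTheory CategoryTheory.Limits TensorProduct Opposite

universe v u

section
variable (k : Type v) [Field k] {C : Type u} [Category.{v} C] [Preadditive C]
  [CategoryTheory.Linear k C]

/-- The submodule of `Hom(Y, X)` consisting of maps fixed by postcomposition with the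
idempotent `ε`. -/
def sharpSubmodule (X : C) (ε : X ⟶ X) (Y : C) : Submodule k (Y ⟶ X) where
  carrier := {f | f ≫ ε = f}
  add_mem' := fun {a b} ha hb => by
    simp only [Set.mem_setOf_eq] at *
    rw [Preadditive.add_comp, ha, hb]
  zero_mem' := by simp
  smul_mem' := fun c a ha => by
    simp only [Set.mem_setOf_eq] at *
    rw [CategoryTheory.Linear.smul_comp, ha]

/-- The `k`-linear presheaf `(X, ε)^♯ : Y ↦ {f ∈ Hom(Y, X) | ε ∘ f = f}`, with precomposition
as functorial action. -/
def sharp (X : C) (ε : X ⟶ X) : Cᵒᵖ ⥤ ModuleCat.{v} k where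
  obj Y := ModuleCat.of k (sharpSubmodule k X ε Y.unop)
  map {Y Z} f := ModuleCat.ofHom
    { toFun := fun g => ⟨f.unop ≫ g.1, by
        have hg : (g : Opposite.unop Y ⟶ X) ≫ ε = g := g.2
        show (f.unop ≫ (g : Opposite.unop Y ⟶ X)) ≫ ε = f.unop ≫ (g : Opposite.unop Y ⟶ X)
        rw [Category.assoc, hg]⟩
      map_add' := fun a b => Subtype.ext (by simp [Preadditive.comp_add])
      map_smul' := fun c a => Subtype.ext (by simp [CategoryTheory.Linear.comp_smul]) }
  map_id Y := by
    ext g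
    first | exact Subtype.ext (by simp) | simp | (apply Subtype.ext; simp) | (apply Subtype.ext; simp [ModuleCat.ofHom]) | exact Subtype.ext (Category.id_comp _)
  map_comp f g := by
    ext x
    first | exact Subtype.ext (by simp) | simp | (apply Subtype.ext; simp) | (apply Subtype.ext; simp [ModuleCat.ofHom]) | exact Subtype.ext (Category.assoc _ _ _)

/-- The predicate on presheaves of `k`-modules on `C`, expressing that the presheaf is
`k`-linear (additive and `k`-homogeneous on Hom-spaces) and valued in finite-dimensional
vector spaces. -/
def LinPresheaf (F : Cᵒᵖ ⥤ ModuleCat.{v} k) : Prop :=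
  (∀ {X Y : C} (f g : X ⟶ Y), F.map (f + g).op = F.map f.op + F.map g.op) ∧
  (∀ {X Y : C} (a : k) (f : X ⟶ Y), F.map (a • f).op = a • F.map f.op) ∧
  (∀ Y : Cᵒᵖ, FiniteDimensional k (F.obj Y))

lemma sharp_linPresheaf (X : C) (ε : X ⟶ X) [∀ A B : C, FiniteDimensional k (A ⟶ B)] :
    LinPresheaf k (sharp k X ε) := by
  refine ⟨fun f g => ?_, fun a f => ?_, fun Y => ?_⟩
  · ext x
    refine Subtype.ext ?_
    simp [sharp, Preadditive.add_comp]
    rfl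
  · ext x
    refine Subtype.ext ?_
    simp [sharp, CategoryTheory.Linear.smul_comp]
    rfl
  · exact inferInstanceAs (FiniteDimensional k (sharpSubmodule k X ε Y.unop))

/-- The presheaf `(X, ε)^♯` as an object of the category of `k`-linear presheaves valued in
finite-dimensional vector spaces. -/
def sharpP (X : C) (ε : X ⟶ X) [∀ A B : C, FiniteDimensional k (A ⟶ B)] :
    ObjectProperty.FullSubcategory (LinPresheaf k (C := C)) :=
  ⟨sharp k X ε, sharp_linPresheaf k X ε⟩

/-- `Hom(ε, ε') = {f : X_ε ⟶ X_ε' | ε' ∘ f ∘ ε = f}` as a submodule. -/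
def idemHom {X X' : C} (ε : X ⟶ X) (ε' : X' ⟶ X') : Submodule k (X ⟶ X') where
  carrier := {f | ε ≫ f ≫ ε' = f}
  add_mem' := fun {a b} ha hb => by
    simp only [Set.mem_setOf_eq] at *
    rw [Preadditive.add_comp, Preadditive.comp_add, ha, hb]
  zero_mem' := by simp
  smul_mem' := fun c a ha => by
    simp only [Set.mem_setOf_eq] at *
    rw [CategoryTheory.Linear.smul_comp, CategoryTheory.Linear.comp_smul, ha]

/-- `Hom(A, ε) = {f : A ⟶ X_ε | ε ∘ f = f}` as a submodule. -/
def toIdemHom (A : C) {X : C} (ε : X ⟶ X) : Submodule k (A ⟶ X) :=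
  sharpSubmodule k X ε A

/-- `Hom(ε, B) = {f : X_ε ⟶ B | f ∘ ε = f}` as a submodule. -/
def fromIdemHom {X : C} (ε : X ⟶ X) (B : C) : Submodule k (X ⟶ B) where
  carrier := {f | ε ≫ f = f}
  add_mem' := fun {a b} ha hb => by
    simp only [Set.mem_setOf_eq] at *
    rw [Preadditive.comp_add, ha, hb]
  zero_mem' := by simp
  smul_mem' := fun c a ha => by
    simp only [Set.mem_setOf_eq] at *
    rw [CategoryTheory.Linear.comp_smul, ha]

/-- The composition pairing `Hom(A, ε) ⊗ Hom(ε, B) →ₗ Hom(A, B)`. -/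
noncomputable def idemCompBil (A : C) {X : C} (ε : X ⟶ X) (B : C) :
    toIdemHom k A ε →ₗ[k] (fromIdemHom k ε B →ₗ[k] (A ⟶ B)) :=
  LinearMap.mk₂ k (fun f g => (f : A ⟶ X) ≫ (g : X ⟶ B))
    (fun f f' g => by simp [Preadditive.add_comp])
    (fun a f g => by simp [CategoryTheory.Linear.smul_comp])
    (fun f g g' => by simp [Preadditive.comp_add])
    (fun a f g => by simp [CategoryTheory.Linear.comp_smul])

/-- The total composition map `⊕_{i} Hom(A, ε i) ⊗ Hom(ε i, B) →ₗ Hom(A, B)`. -/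
noncomputable def idemCompTotal (ι : Type) [Fintype ι] [DecidableEq ι] {E : ι → C} (ε : ∀ i, E i ⟶ E i)
    (A B : C) :
    DirectSum ι (fun i => toIdemHom k A (ε i) ⊗[k] fromIdemHom k (ε i) B) →ₗ[k] (A ⟶ B) :=
  DirectSum.toModule k ι _ (fun i => TensorProduct.lift (idemCompBil k A (ε i) B))

end

set_option linter.unusedSectionVars false
set_option maxHeartbeats 1000000

section Aux
variable {k : Type v} [Field k] {C : Type u} [Category.{v} C] [Preadditive C]
  [CategoryTheory.Linear k C]

/-- The category of linear presheaves. -/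
abbrev DCat (k : Type v) [Field k] (C : Type u) [Category.{v} C] [Preadditive C]
    [CategoryTheory.Linear k C] := ObjectProperty.FullSubcategory (LinPresheaf k (C := C))

lemma lp_map_zero {F : Cᵒᵖ ⥤ ModuleCat.{v} k} (hF : LinPresheaf k F) (A B : C) :
    F.map (0 : A ⟶ B).op = 0 := by
  have : (0 : A ⟶ B) = (0 : k) • (0 : A ⟶ B) := by simp
  rw [this, hF.2.1, zero_smul]

lemma lp_map_sum {F : Cᵒᵖ ⥤ ModuleCat.{v} k} (hF : LinPresheaf k F) {A B : C}
    {α : Type*} (s : Finset α) (u : α → (A ⟶ B)) :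
    F.map (∑ p ∈ s, u p).op = ∑ p ∈ s, F.map (u p).op := by
  classical
  induction s using Finset.induction with
  | empty => simpa using lp_map_zero hF A B
  | insert _ _ hq ih =>
    rw [Finset.sum_insert hq, Finset.sum_insert hq, hF.1, ih]

lemma map_op_comp (F : Cᵒᵖ ⥤ ModuleCat.{v} k) {A B D : C} (f : A ⟶ B) (g : B ⟶ D)
    (x : F.obj (op D)) : F.map (f ≫ g).op x = F.map f.op (F.map g.op x) := by
  rw [op_comp, F.map_comp]; rfl

variable {ι : Type} [Fintype ι] [DecidableEq ι] {E : ι → C} (ε : ∀ i, E i ⟶ E i)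

/-- The submodule of `F(E i)` on which the idempotent acts as identity. -/
def Vsub (F : DCat k C) (i : ι) : Submodule k (F.obj.obj (op (E i))) where
  carrier := {x | F.obj.map (ε i).op x = x}
  add_mem' := fun {a b} ha hb => by
    simp only [Set.mem_setOf_eq] at *
    rw [map_add, ha, hb]
  zero_mem' := by simp [Set.mem_setOf_eq]
  smul_mem' := fun c a ha => by
    simp only [Set.mem_setOf_eq] at *
    rw [map_smul, ha]

lemma Vsub_fix {F : DCat k C} {i : ι} (v : Vsub ε F i) :
    F.obj.map (ε i).op v.1 = v.1 := v.2

/-- `F(g) : F(A) → V_i F` for `g ∈ Hom(ε i, A)`. -/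
def toV (F : DCat k C) {i : ι} {A : C} (g : fromIdemHom k (ε i) A) :
    F.obj.obj (op A) →ₗ[k] Vsub ε F i where
  toFun x := ⟨F.obj.map (g : E i ⟶ A).op x, by
    show F.obj.map (ε i).op _ = _
    rw [← map_op_comp F.obj (ε i) (g : E i ⟶ A) x, g.2]⟩
  map_add' a b := Subtype.ext (by simp)
  map_smul' c a := Subtype.ext (by simp)

/-- `F(f) : V_i F → F(A)` for `f ∈ Hom(A, ε i)`. -/
def ofV (F : DCat k C) {i : ι} {A : C} (f : toIdemHom k A (ε i)) :
    Vsub ε F i →ₗ[k] F.obj.obj (op A) where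
  toFun v := F.obj.map (f : A ⟶ E i).op v.1
  map_add' a b := by simp
  map_smul' c a := by simp

/-- Restriction along an element of `idemHom`. -/
def Vres (F : DCat k C) {i j : ι} (h : E i ⟶ E j) (hh : h ∈ idemHom k (ε i) (ε j)) :
    Vsub ε F j →ₗ[k] Vsub ε F i where
  toFun v := ⟨F.obj.map h.op v.1, by
    show F.obj.map (ε i).op _ = _
    conv_lhs => rw [← Vsub_fix ε v]
    rw [← map_op_comp, ← map_op_comp, Category.assoc, show ε i ≫ h ≫ ε j = h from hh]⟩
  map_add' a b := Subtype.ext (by simp)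
  map_smul' c a := Subtype.ext (by simp)

end Aux

section Aux2
variable {k : Type v} [Field k] {C : Type u} [Category.{v} C] [Preadditive C]
  [CategoryTheory.Linear k C] [∀ X Y : C, FiniteDimensional k (X ⟶ Y)]
variable {ι : Type} [Fintype ι] [DecidableEq ι] {E : ι → C} {ε : ∀ i, E i ⟶ E i}
variable (hidem : ∀ i, ε i ≫ ε i = ε i)
    (hprim : ∀ i, Module.finrank k (idemHom k (ε i) (ε i)) = 1)
    (horth : ∀ i j, i ≠ j → idemHom k (ε i) (ε j) = ⊥)
    (hcomplete : ∀ A B : C, Function.Bijective (idemCompTotal k ι ε A B))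

include hidem in
lemma epsMem (i : ι) : ε i ∈ idemHom k (ε i) (ε i) := by
  show ε i ≫ ε i ≫ ε i = ε i
  rw [hidem, hidem]

include hprim in
lemma eps_ne_zero (i : ι) : ε i ≠ 0 := by
  intro h0
  have hbot : idemHom k (ε i) (ε i) = ⊥ := by
    rw [eq_bot_iff]
    intro f hf
    have : ε i ≫ f ≫ ε i = f := hf
    rw [h0] at this
    simp only [Limits.zero_comp] at this
    simpa [← this] using Submodule.zero_mem _
  have h2 := hprim i
  rw [hbot] at h2
  simpa using h2

include hidem hprim in
lemma exists_smul_eps (i : ι) (f : E i ⟶ E i) (hf : f ∈ idemHom k (ε i) (ε i)) :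
    ∃ c : k, c • ε i = f := by
  have hne : (⟨ε i, epsMem hidem i⟩ : idemHom k (ε i) (ε i)) ≠ 0 := by
    intro h; exact eps_ne_zero hprim i (by simpa [Subtype.ext_iff] using h)
  obtain ⟨c, hc⟩ := (finrank_eq_one_iff_of_nonzero' _ hne).mp (hprim i) ⟨f, hf⟩
  exact ⟨c, by simpa [Subtype.ext_iff] using hc⟩

include hidem hprim horth in
lemma equivar {F G : DCat k C} (φ : ∀ l, Vsub ε F l →ₗ[k] Vsub ε G l) {i j : ι}
    (h : E i ⟶ E j) (hh : h ∈ idemHom k (ε i) (ε j)) (v : Vsub ε F j) :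
    φ i (Vres ε F h hh v) = Vres ε G h hh (φ j v) := by
  by_cases hij : i = j
  · subst hij
    obtain ⟨c, hc⟩ := exists_smul_eps hidem hprim i h hh
    have hF : Vres ε F h hh v = c • v := by
      refine Subtype.ext ?_
      show F.obj.map h.op v.1 = c • v.1
      rw [← hc, F.property.2.1]
      show c • (F.obj.map (ε i).op v.1) = c • v.1
      rw [Vsub_fix]
    have hG : Vres ε G h hh (φ i v) = c • (φ i v) := by
      refine Subtype.ext ?_
      show G.obj.map h.op (φ i v).1 = c • (φ i v).1
      rw [← hc, G.property.2.1]
      show c • (G.obj.map (ε i).op (φ i v).1) = c • (φ i v).1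
      rw [Vsub_fix]
    rw [hF, hG, map_smul]
  · have h0 : h = 0 := by
      have := horth i j hij ▸ hh
      simpa using this
    subst h0
    have hF : Vres ε F 0 hh v = 0 := Subtype.ext (by
      show F.obj.map (0 : E i ⟶ E j).op v.1 = 0
      rw [lp_map_zero F.property]; rfl)
    have hG : Vres ε G 0 hh (φ j v) = 0 := Subtype.ext (by
      show G.obj.map (0 : E i ⟶ E j).op (φ j v).1 = 0
      rw [lp_map_zero G.property]; rfl)
    rw [hF, hG, map_zero]

include hcomplete in
lemma exists_decomp (A : C) :
    ∃ s : Finset (Σ i : ι, toIdemHom k A (ε i) × fromIdemHom k (ε i) A),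
      ∑ p ∈ s, ((p.2.1 : A ⟶ E p.1) ≫ (p.2.2 : E p.1 ⟶ A)) = 𝟙 A := by
  obtain ⟨w, hw⟩ := (hcomplete A A).2 (𝟙 A)
  choose t ht using fun i => TensorProduct.exists_finset (w i)
  refine ⟨Finset.univ.sigma t, ?_⟩
  rw [Finset.sum_sigma, ← hw]
  conv_rhs => rw [← DirectSum.sum_univ_of w, map_sum]
  refine Finset.sum_congr rfl (fun i _ => ?_)
  have h1 : idemCompTotal k ι ε A A (DirectSum.of _ i (w i))
      = TensorProduct.lift (idemCompBil k A (ε i) A) (w i) := by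
    rw [← DirectSum.lof_eq_of k, idemCompTotal, DirectSum.toModule_lof]
  rw [h1, ht i, map_sum]
  refine Finset.sum_congr rfl (fun p _ => ?_)
  rw [TensorProduct.lift.tmul]
  rfl

end Aux2

section Aux3
variable {k : Type v} [Field k] {C : Type u} [Category.{v} C] [Preadditive C]
  [CategoryTheory.Linear k C] [∀ X Y : C, FiniteDimensional k (X ⟶ Y)]
variable {ι : Type} [Fintype ι] [DecidableEq ι] {E : ι → C} {ε : ∀ i, E i ⟶ E i}

lemma dcomp_app {F G H : DCat k C} (η : F ⟶ G) (θ : G ⟶ H) (Y : Cᵒᵖ) (x : F.obj.obj Y) :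
    (η ≫ θ).hom.app Y x = θ.hom.app Y (η.hom.app Y x) := rfl

lemma dsmul_app {F G : DCat k C} (a : k) (η : F ⟶ G) (Y : Cᵒᵖ) (x : F.obj.obj Y) :
    (a • η).hom.app Y x = a • (η.hom.app Y x) := rfl

lemma dzero_app {F G : DCat k C} (Y : Cᵒᵖ) (x : F.obj.obj Y) : (0 : F ⟶ G).hom.app Y x = 0 := rfl

lemma dsum_app {F G : DCat k C} {α : Type*} (s : Finset α) (u : α → (F ⟶ G)) (Y : Cᵒᵖ)
    (x : F.obj.obj Y) : (∑ m ∈ s, u m).hom.app Y x = ∑ m ∈ s, (u m).hom.app Y x := by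
  classical
  induction s using Finset.induction with
  | empty => rfl
  | insert _ _ hq ih => rw [Finset.sum_insert hq, Finset.sum_insert hq, ← ih]; rfl

lemma did_app {F : DCat k C} (Y : Cᵒᵖ) (x : F.obj.obj Y) : (𝟙 F : F ⟶ F).hom.app Y x = x := rfl

lemma hom_sum_apply {M N : ModuleCat.{v} k} {α : Type*} (s : Finset α) (u : α → (M ⟶ N)) (x : M) :
    (∑ m ∈ s, u m) x = ∑ m ∈ s, u m x := by
  classical
  induction s using Finset.induction with
  | empty => rfl
  | insert _ _ hq ih => rw [Finset.sum_insert hq, Finset.sum_insert hq, ← ih]; rfl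

lemma nat_app {F G : DCat k C} (η : F ⟶ G) {A B : C} (f : A ⟶ B) (x : F.obj.obj (op B)) :
    η.hom.app (op A) (F.obj.map f.op x) = G.obj.map f.op (η.hom.app (op B) x) :=
  ConcreteCategory.congr_hom (η.hom.naturality f.op) x

/-- The functional `Vmap`. -/
def Vmap {F G : DCat k C} (η : F ⟶ G) (i : ι) : Vsub ε F i →ₗ[k] Vsub ε G i where
  toFun v := ⟨η.hom.app (op (E i)) v.1, by
    show G.obj.map (ε i).op _ = _
    have hn := ConcreteCategory.congr_hom (η.hom.naturality (ε i).op) v.1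
    calc G.obj.map (ε i).op (η.hom.app (op (E i)) v.1)
        = η.hom.app (op (E i)) (F.obj.map (ε i).op v.1) := hn.symm
      _ = η.hom.app (op (E i)) v.1 := by rw [Vsub_fix]⟩
  map_add' a b := Subtype.ext (by simp)
  map_smul' c a := Subtype.ext (by simp)

lemma Vmap_apply {F G : DCat k C} (η : F ⟶ G) (i : ι) (v : Vsub ε F i) :
    (Vmap (ε := ε) η i v).1 = η.hom.app (op (E i)) v.1 := rfl

lemma Vmap_comp {F G H : DCat k C} (η : F ⟶ G) (θ : G ⟶ H) (i : ι) (v : Vsub ε F i) :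
    Vmap (ε := ε) (η ≫ θ) i v = Vmap θ i (Vmap η i v) := rfl

lemma Vmap_id {F : DCat k C} (i : ι) (v : Vsub ε F i) : Vmap (ε := ε) (𝟙 F) i v = v := rfl

lemma Vmap_smul {F G : DCat k C} (a : k) (η : F ⟶ G) (i : ι) (v : Vsub ε F i) :
    Vmap (ε := ε) (a • η) i v = a • Vmap η i v := rfl

lemma Vmap_zero {F G : DCat k C} (i : ι) (v : Vsub ε F i) :
    Vmap (ε := ε) (0 : F ⟶ G) i v = 0 := rfl

lemma Vmap_sum {F G : DCat k C} {α : Type*} (s : Finset α) (u : α → (F ⟶ G)) (i : ι)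
    (v : Vsub ε F i) : Vmap (ε := ε) (∑ m ∈ s, u m) i v = ∑ m ∈ s, Vmap (u m) i v := by
  refine Subtype.ext ?_
  rw [Vmap_apply, dsum_app]
  rw [AddSubmonoidClass.coe_finset_sum (fun m => Vmap (ε := ε) (u m) i v) s]
  rfl

variable (hcomplete : ∀ A B : C, Function.Bijective (idemCompTotal k ι ε A B))

include hcomplete in
lemma decomp_apply {A : C}
    {s : Finset (Σ i : ι, toIdemHom k A (ε i) × fromIdemHom k (ε i) A)}
    (hs : ∑ p ∈ s, ((p.2.1 : A ⟶ E p.1) ≫ (p.2.2 : E p.1 ⟶ A)) = 𝟙 A)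
    (H : DCat k C) (x : H.obj.obj (op A)) :
    x = ∑ p ∈ s, H.obj.map (p.2.1 : A ⟶ E p.1).op
      (H.obj.map (p.2.2 : E p.1 ⟶ A).op x) := by
  have e1 : H.obj.map (𝟙 (op A)) x = x := by rw [H.obj.map_id]; rfl
  conv_lhs => rw [← e1]
  rw [← op_id, ← hs, lp_map_sum H.property, hom_sum_apply]
  exact Finset.sum_congr rfl fun p _ => map_op_comp H.obj _ _ x

include hcomplete in
lemma hom_ext {F G : DCat k C} (η θ : F ⟶ G)
    (h : ∀ i, Vmap (ε := ε) η i = Vmap (ε := ε) θ i) : η = θ := by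
  have happ : ∀ (Y : Cᵒᵖ), η.hom.app Y = θ.hom.app Y := by
    intro Y
    obtain ⟨A⟩ := Y
    refine ConcreteCategory.hom_ext _ _ fun x => ?_
    obtain ⟨s, hs⟩ := exists_decomp hcomplete A
    have key : ∀ (ρ : F ⟶ G), ρ.hom.app (op A) x
        = ∑ p ∈ s, G.obj.map (p.2.1 : A ⟶ E p.1).op
            ((Vmap (ε := ε) ρ p.1 (toV ε F p.2.2 x)).1) := by
      intro ρ
      conv_lhs => rw [decomp_apply hcomplete hs F x]
      rw [map_sum]
      exact Finset.sum_congr rfl fun p _ => nat_app ρ _ _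
    rw [key η, key θ]
    exact Finset.sum_congr rfl fun p _ => by rw [h p.1]
  exact ObjectProperty.hom_ext (h := NatTrans.ext (funext happ))

end Aux3

section Aux4
variable {k : Type v} [Field k] {C : Type u} [Category.{v} C] [Preadditive C]
  [CategoryTheory.Linear k C] [∀ X Y : C, FiniteDimensional k (X ⟶ Y)]
variable {ι : Type} [Fintype ι] [DecidableEq ι] {E : ι → C} {ε : ∀ i, E i ⟶ E i}
variable (hidem : ∀ i, ε i ≫ ε i = ε i)
    (hprim : ∀ i, Module.finrank k (idemHom k (ε i) (ε i)) = 1)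
    (horth : ∀ i j, i ≠ j → idemHom k (ε i) (ε j) = ⊥)
    (hcomplete : ∀ A B : C, Function.Bijective (idemCompTotal k ι ε A B))

/-- A chosen decomposition of the identity of `A`. -/
noncomputable def decS (A : C) : Finset (Σ i : ι, toIdemHom k A (ε i) × fromIdemHom k (ε i) A) :=
  (exists_decomp hcomplete A).choose

lemma decS_sum (A : C) :
    ∑ p ∈ decS hcomplete A, ((p.2.1 : A ⟶ E p.1) ≫ (p.2.2 : E p.1 ⟶ A)) = 𝟙 A :=
  (exists_decomp hcomplete A).choose_spec

/-- Realize a family of linear maps between the `Vsub`s as a natural transformation. -/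
noncomputable def realize {F G : DCat k C} (φ : ∀ l, Vsub ε F l →ₗ[k] Vsub ε G l) : F ⟶ G where
  hom.app Y := ModuleCat.ofHom (∑ p ∈ decS hcomplete Y.unop,
    ((ofV ε G p.2.1) ∘ₗ ((φ p.1) ∘ₗ (toV ε F p.2.2))))
  hom.naturality {Y Z} u := by
    refine ConcreteCategory.hom_ext _ _ fun x => ?_
    obtain ⟨A⟩ := Y; obtain ⟨B⟩ := Z
    set w : B ⟶ A := u.unop with hw
    have hu : u = w.op := rfl
    show (∑ p ∈ decS hcomplete B, ((ofV ε G p.2.1) ∘ₗ ((φ p.1) ∘ₗ (toV ε F p.2.2))))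
        (F.obj.map u x)
      = G.obj.map u ((∑ p ∈ decS hcomplete A, ((ofV ε G p.2.1) ∘ₗ ((φ p.1) ∘ₗ (toV ε F p.2.2)))) x)
    rw [LinearMap.sum_apply, LinearMap.sum_apply, map_sum]
    have hmem : ∀ (p : Σ i : ι, toIdemHom k B (ε i) × fromIdemHom k (ε i) B)
        (q : Σ i : ι, toIdemHom k A (ε i) × fromIdemHom k (ε i) A),
        ((p.2.2 : E p.1 ⟶ B) ≫ w) ≫ (q.2.1 : A ⟶ E q.1) ∈ idemHom k (ε p.1) (ε q.1) := by
      intro p q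
      have hg : ε p.1 ≫ (p.2.2 : E p.1 ⟶ B) = p.2.2 := p.2.2.2
      have hf : (q.2.1 : A ⟶ E q.1) ≫ ε q.1 = q.2.1 := q.2.1.2
      show ε p.1 ≫ (((p.2.2 : E p.1 ⟶ B) ≫ w) ≫ (q.2.1 : A ⟶ E q.1)) ≫ ε q.1 = _
      simp only [Category.assoc]
      rw [hf, reassoc_of% hg]
    have step1 : ∀ p ∈ decS hcomplete B,
        toV ε F p.2.2 (F.obj.map u x)
          = ∑ q ∈ decS hcomplete A,
              Vres ε F _ (hmem p q) (toV ε F q.2.2 x) := by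
      intro p _
      refine Subtype.ext ?_
      rw [AddSubmonoidClass.coe_finset_sum]
      show F.obj.map (p.2.2 : E p.1 ⟶ B).op (F.obj.map w.op x) = _
      rw [← map_op_comp]
      have e2 : (p.2.2 : E p.1 ⟶ B) ≫ w
          = ∑ q ∈ decS hcomplete A, (((p.2.2 : E p.1 ⟶ B) ≫ w) ≫ (q.2.1 : A ⟶ E q.1)) ≫ (q.2.2 : E q.1 ⟶ A) := by
        conv_lhs => rw [← Category.comp_id ((p.2.2 : E p.1 ⟶ B) ≫ w), ← decS_sum hcomplete A]
        rw [Preadditive.comp_sum]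
        exact Finset.sum_congr rfl fun q _ => by simp only [Category.assoc]
      conv_lhs => rw [e2]
      rw [lp_map_sum F.property, hom_sum_apply]
      exact Finset.sum_congr rfl fun q _ => by
        rw [map_op_comp]
        rfl
    calc ∑ p ∈ decS hcomplete B, ((ofV ε G p.2.1) ∘ₗ ((φ p.1) ∘ₗ (toV ε F p.2.2))) (F.obj.map u x)
        = ∑ p ∈ decS hcomplete B, ∑ q ∈ decS hcomplete A,
            G.obj.map (((p.2.1 : B ⟶ E p.1) ≫ ((p.2.2 : E p.1 ⟶ B) ≫ w) ≫ (q.2.1 : A ⟶ E q.1))).op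
              ((φ q.1 (toV ε F q.2.2 x)).1) := by
          refine Finset.sum_congr rfl fun p hp => ?_
          show ofV ε G p.2.1 (φ p.1 (toV ε F p.2.2 (F.obj.map u x))) = _
          rw [step1 p hp, map_sum]
          show G.obj.map (p.2.1 : B ⟶ E p.1).op
              ((∑ q ∈ decS hcomplete A, φ p.1 (Vres ε F _ (hmem p q) (toV ε F q.2.2 x))).1) = _
          rw [AddSubmonoidClass.coe_finset_sum, map_sum]
          refine Finset.sum_congr rfl fun q _ => ?_
          rw [equivar hidem hprim horth φ _ (hmem p q)]
          rw [map_op_comp]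
          rfl
      _ = ∑ q ∈ decS hcomplete A,
            G.obj.map ((w ≫ (q.2.1 : A ⟶ E q.1))).op ((φ q.1 (toV ε F q.2.2 x)).1) := by
          rw [Finset.sum_comm]
          refine Finset.sum_congr rfl fun q _ => ?_
          have e3 : ∑ p ∈ decS hcomplete B,
              ((p.2.1 : B ⟶ E p.1) ≫ ((p.2.2 : E p.1 ⟶ B) ≫ w) ≫ (q.2.1 : A ⟶ E q.1))
              = w ≫ (q.2.1 : A ⟶ E q.1) := by
            calc ∑ p ∈ decS hcomplete B,
                ((p.2.1 : B ⟶ E p.1) ≫ ((p.2.2 : E p.1 ⟶ B) ≫ w) ≫ (q.2.1 : A ⟶ E q.1))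
                = ∑ p ∈ decS hcomplete B,
                    ((p.2.1 : B ⟶ E p.1) ≫ (p.2.2 : E p.1 ⟶ B)) ≫ (w ≫ (q.2.1 : A ⟶ E q.1)) :=
                  Finset.sum_congr rfl fun p _ => by simp only [Category.assoc]
              _ = (∑ p ∈ decS hcomplete B, ((p.2.1 : B ⟶ E p.1) ≫ (p.2.2 : E p.1 ⟶ B)))
                    ≫ (w ≫ (q.2.1 : A ⟶ E q.1)) := (Preadditive.sum_comp _ _ _).symm
              _ = w ≫ (q.2.1 : A ⟶ E q.1) := by rw [decS_sum hcomplete B, Category.id_comp]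
          rw [← e3, lp_map_sum G.property, hom_sum_apply]
      _ = ∑ q ∈ decS hcomplete A,
            G.obj.map u (((ofV ε G q.2.1) ∘ₗ ((φ q.1) ∘ₗ (toV ε F q.2.2))) x) :=
          Finset.sum_congr rfl fun q _ => map_op_comp G.obj w _ _

include hidem hprim horth in
lemma realize_spec {F G : DCat k C} (φ : ∀ l, Vsub ε F l →ₗ[k] Vsub ε G l) (i : ι) :
    Vmap (ε := ε) (realize hidem hprim horth hcomplete φ) i = φ i := by
  refine LinearMap.ext fun v => Subtype.ext ?_
  have hmem' : ∀ p : (Σ l : ι, toIdemHom k (E i) (ε l) × fromIdemHom k (ε l) (E i)),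
      (p.2.2 : E p.1 ⟶ E i) ≫ ε i ∈ idemHom k (ε p.1) (ε i) := by
    intro p
    have hg : ε p.1 ≫ (p.2.2 : E p.1 ⟶ E i) = p.2.2 := p.2.2.2
    show ε p.1 ≫ ((p.2.2 : E p.1 ⟶ E i) ≫ ε i) ≫ ε i = _
    simp only [Category.assoc]
    rw [hidem, reassoc_of% hg]
  calc (Vmap (ε := ε) (realize hidem hprim horth hcomplete φ) i v).1
      = (∑ p ∈ decS hcomplete (E i),
          ((ofV ε G p.2.1) ∘ₗ ((φ p.1) ∘ₗ (toV ε F p.2.2)))) v.1 := rfl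
    _ = ∑ p ∈ decS hcomplete (E i),
          G.obj.map ((p.2.1 : E i ⟶ E p.1) ≫ (p.2.2 : E p.1 ⟶ E i) ≫ ε i).op ((φ i v).1) := by
        rw [LinearMap.sum_apply]
        refine Finset.sum_congr rfl fun p _ => ?_
        have e1 : toV ε F p.2.2 v.1 = Vres ε F _ (hmem' p) v := Subtype.ext (by
          show F.obj.map (p.2.2 : E p.1 ⟶ E i).op v.1
            = F.obj.map ((p.2.2 : E p.1 ⟶ E i) ≫ ε i).op v.1
          rw [map_op_comp, Vsub_fix])
        show G.obj.map (p.2.1 : E i ⟶ E p.1).op ((φ p.1 (toV ε F p.2.2 v.1)).1) = _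
        rw [e1, equivar hidem hprim horth φ _ (hmem' p)]
        show G.obj.map (p.2.1 : E i ⟶ E p.1).op
            (G.obj.map ((p.2.2 : E p.1 ⟶ E i) ≫ ε i).op (φ i v).1) = _
        rw [← map_op_comp]
    _ = (φ i v).1 := by
        have e2 : ∑ p ∈ decS hcomplete (E i),
            ((p.2.1 : E i ⟶ E p.1) ≫ (p.2.2 : E p.1 ⟶ E i) ≫ ε i) = ε i := by
          calc ∑ p ∈ decS hcomplete (E i),
              ((p.2.1 : E i ⟶ E p.1) ≫ (p.2.2 : E p.1 ⟶ E i) ≫ ε i)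
              = ∑ p ∈ decS hcomplete (E i),
                  ((p.2.1 : E i ⟶ E p.1) ≫ (p.2.2 : E p.1 ⟶ E i)) ≫ ε i :=
                Finset.sum_congr rfl fun p _ => by simp only [Category.assoc]
            _ = (∑ p ∈ decS hcomplete (E i),
                  ((p.2.1 : E i ⟶ E p.1) ≫ (p.2.2 : E p.1 ⟶ E i))) ≫ ε i :=
                (Preadditive.sum_comp _ _ _).symm
            _ = ε i := by rw [decS_sum hcomplete (E i), Category.id_comp]
        rw [← hom_sum_apply, ← lp_map_sum G.property, e2]
        exact Vsub_fix ε (φ i v)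

end Aux4

section Aux5
variable {k : Type v} [Field k] {C : Type u} [Category.{v} C] [Preadditive C]
  [CategoryTheory.Linear k C] [∀ X Y : C, FiniteDimensional k (X ⟶ Y)]
variable {ι : Type} [Fintype ι] [DecidableEq ι] {E : ι → C} {ε : ∀ i, E i ⟶ E i}
variable (hidem : ∀ i, ε i ≫ ε i = ε i)
    (hprim : ∀ i, Module.finrank k (idemHom k (ε i) (ε i)) = 1)
    (horth : ∀ i j, i ≠ j → idemHom k (ε i) (ε j) = ⊥)
    (hcomplete : ∀ A B : C, Function.Bijective (idemCompTotal k ι ε A B))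

/-- The canonical element `ε i` of `V_i (sharp ε i)`. -/
def epsElt (i : ι) : Vsub ε (sharpP k (E i) (ε i)) i :=
  ⟨⟨ε i, hidem i⟩, Subtype.ext (hidem i)⟩

lemma vsharp_mem_idemHom {i j : ι} (x : Vsub ε (sharpP k (E j) (ε j)) i) :
    (x.1.1 : E i ⟶ E j) ∈ idemHom k (ε i) (ε j) := by
  have h1 : x.1.1 ≫ ε j = x.1.1 := x.1.2
  have h2 : ε i ≫ x.1.1 = x.1.1 := congrArg Subtype.val x.2
  show ε i ≫ x.1.1 ≫ ε j = x.1.1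
  rw [h1, h2]

include horth in
lemma vsharp_eq_zero {i j : ι} (hij : i ≠ j) (x : Vsub ε (sharpP k (E j) (ε j)) i) : x = 0 := by
  have := horth i j hij ▸ vsharp_mem_idemHom x
  have hx : x.1.1 = 0 := by simpa using this
  exact Subtype.ext (Subtype.ext hx)

include hidem hprim in
lemma vsharp_eq_smul (i : ι) (x : Vsub ε (sharpP k (E i) (ε i)) i) :
    ∃ c : k, x = c • epsElt hidem i := by
  obtain ⟨c, hc⟩ := exists_smul_eps hidem hprim i x.1.1 (vsharp_mem_idemHom x)
  exact ⟨c, Subtype.ext (Subtype.ext hc.symm)⟩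

include hidem hprim in
lemma ext_eps {i : ι} {M : Type*} [AddCommGroup M] [Module k M]
    (φ ψ : Vsub ε (sharpP k (E i) (ε i)) i →ₗ[k] M)
    (h : φ (epsElt hidem i) = ψ (epsElt hidem i)) : φ = ψ := by
  refine LinearMap.ext fun x => ?_
  obtain ⟨c, hc⟩ := vsharp_eq_smul hidem hprim i x
  rw [hc, map_smul, map_smul, h]

include hprim in
lemma eps_ne_zero' (i : ι) : epsElt (k := k) (ε := ε) hidem i ≠ 0 := by
  intro h
  exact eps_ne_zero hprim i (congrArg (fun t => t.1.1) h)

/-- The co-Yoneda morphism attached to `v ∈ V_i F`. -/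
def sv (i : ι) (F : DCat k C) (v : Vsub ε F i) : sharpP k (E i) (ε i) ⟶ F where
  hom.app Y := ModuleCat.ofHom
    { toFun := fun g => F.obj.map (g.1 : Y.unop ⟶ E i).op v.1
      map_add' := fun a b => by
        show F.obj.map ((a.1 : Y.unop ⟶ E i) + b.1).op v.1 = _
        rw [F.property.1]
        rfl
      map_smul' := fun c a => by
        show F.obj.map (c • (a.1 : Y.unop ⟶ E i)).op v.1 = _
        rw [F.property.2.1]
        rfl }
  hom.naturality {Y Z} u := by
    refine ConcreteCategory.hom_ext _ _ fun g => ?_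
    show F.obj.map ((u.unop ≫ (g.1 : Y.unop ⟶ E i))).op v.1
      = F.obj.map u (F.obj.map (g.1 : Y.unop ⟶ E i).op v.1)
    exact map_op_comp F.obj u.unop g.1 v.1

lemma Vmap_sv (i : ι) (F : DCat k C) (v : Vsub ε F i) :
    Vmap (ε := ε) (sv i F v) i (epsElt hidem i) = v :=
  Subtype.ext (Vsub_fix ε v)

include hcomplete in
lemma mono_of_inj {W F : DCat k C} (f : W ⟶ F)
    (h : ∀ l, Function.Injective (Vmap (ε := ε) f l)) : Mono f := by
  constructor
  intro Z g g' hgg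
  refine hom_ext hcomplete g g' fun i => LinearMap.ext fun x => h i ?_
  have h2 : Vmap (ε := ε) (g ≫ f) i x = Vmap (ε := ε) (g' ≫ f) i x := by rw [hgg]
  rw [Vmap_comp, Vmap_comp] at h2
  exact h2

include hidem hprim horth hcomplete in
lemma inj_of_mono {W F : DCat k C} (f : W ⟶ F) [Mono f] (l : ι) :
    Function.Injective (Vmap (ε := ε) f l) := by
  intro v w hvw
  have hd : Vmap (ε := ε) f l (v - w) = 0 := by rw [map_sub, hvw, sub_self]
  have h1 : sv l W (v - w) ≫ f = (0 : sharpP k (E l) (ε l) ⟶ W) ≫ f := by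
    rw [Limits.zero_comp]
    refine hom_ext hcomplete _ 0 fun r => LinearMap.ext fun x => ?_
    rw [Vmap_comp]
    by_cases hr : r = l
    · subst hr
      obtain ⟨c, hc⟩ := vsharp_eq_smul hidem hprim r x
      rw [hc, map_smul, map_smul, Vmap_sv, hd, smul_zero]
      rfl
    · rw [vsharp_eq_zero horth hr x, map_zero, map_zero]
      rfl
  have h2 : sv l W (v - w) = 0 := by
    rw [Limits.zero_comp] at h1
    exact (cancel_mono f).mp (by rw [h1, Limits.zero_comp])
  have h3 : v - w = Vmap (ε := ε) (sv l W (v - w)) l (epsElt hidem l) :=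
    (Vmap_sv hidem l W (v - w)).symm
  rw [h2] at h3
  have hz : v - w = 0 := by rw [h3]; rfl
  exact sub_eq_zero.mp hz

end Aux5

section Aux6
variable {k : Type v} [Field k] {C : Type u} [Category.{v} C] [Preadditive C]
  [CategoryTheory.Linear k C] [∀ X Y : C, FiniteDimensional k (X ⟶ Y)]
variable {ι : Type} [Fintype ι] [DecidableEq ι] {E : ι → C} {ε : ∀ i, E i ⟶ E i}
variable (hidem : ∀ i, ε i ≫ ε i = ε i)
    (hprim : ∀ i, Module.finrank k (idemHom k (ε i) (ε i)) = 1)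
    (horth : ∀ i j, i ≠ j → idemHom k (ε i) (ε j) = ⊥)
    (hcomplete : ∀ A B : C, Function.Bijective (idemCompTotal k ι ε A B))

/-- A family of maps supported at a single index. -/
noncomputable def onePointFam {F G : DCat k C} (i : ι)
    (ψ : Vsub ε F i →ₗ[k] Vsub ε G i) (l : ι) : Vsub ε F l →ₗ[k] Vsub ε G l :=
  if h : l = i then (by subst h; exact ψ) else 0

lemma onePointFam_same {F G : DCat k C} (i : ι) (ψ : Vsub ε F i →ₗ[k] Vsub ε G i) :
    onePointFam i ψ i = ψ := by
  rw [onePointFam, dif_pos rfl]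

lemma onePointFam_other {F G : DCat k C} (i : ι) (ψ : Vsub ε F i →ₗ[k] Vsub ε G i)
    {l : ι} (h : l ≠ i) : onePointFam i ψ l = 0 := dif_neg h

include hidem hprim horth hcomplete in
lemma zero_of_vmaps_zero {F G : DCat k C} (η : F ⟶ G)
    (h : ∀ l, Vmap (ε := ε) η l = 0) : η = 0 := by
  refine hom_ext hcomplete η 0 fun l => ?_
  rw [h l]
  exact LinearMap.ext fun x => (Vmap_zero (ε := ε) l x).symm

include hidem hprim horth hcomplete in
lemma simple_sharp (i : ι) : Simple (sharpP k (E i) (ε i)) := by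
  constructor
  intro W f hMono
  constructor
  · intro hIso h0
    have hid : 𝟙 (sharpP k (E i) (ε i)) = 0 := by
      rw [← IsIso.inv_hom_id f, show inv f ≫ f = inv f ≫ (0 : W ⟶ sharpP k (E i) (ε i))
        from congrArg (fun t => inv f ≫ t) h0, Limits.comp_zero]
    have := congrArg (fun t => Vmap (ε := ε) t i (epsElt hidem i)) hid
    exact eps_ne_zero' hidem hprim i this
  · intro hne
    -- injectivity of all Vmaps
    have hinj : ∀ l, Function.Injective (Vmap (ε := ε) f l) :=
      inj_of_mono hidem hprim horth hcomplete f
    -- some Vmap is nonzero, and it must be at i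
    have hsome : ¬ ∀ l, Vmap (ε := ε) f l = 0 := fun h =>
      hne (zero_of_vmaps_zero hidem hprim horth hcomplete f h)
    have hVi : ∃ x, Vmap (ε := ε) f i x ≠ 0 := by
      by_contra hx
      push_neg at hx
      refine hsome fun l => ?_
      by_cases hl : l = i
      · subst hl
        exact LinearMap.ext fun x => hx x
      · exact LinearMap.ext fun x => by
          rw [vsharp_eq_zero horth hl (Vmap (ε := ε) f l x)]; rfl
    obtain ⟨x0, hx0⟩ := hVi
    -- bijectivity of Vmap f i
    have hsurj : Function.Surjective (Vmap (ε := ε) f i) := by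
      intro y
      obtain ⟨c, hc⟩ := vsharp_eq_smul hidem hprim i (Vmap (ε := ε) f i x0)
      have hcne : c ≠ 0 := by
        intro h0
        rw [h0, zero_smul] at hc
        exact hx0 hc
      obtain ⟨d, hd⟩ := vsharp_eq_smul hidem hprim i y
      refine ⟨(d * c⁻¹) • x0, ?_⟩
      rw [map_smul, hc, smul_smul, mul_assoc, inv_mul_cancel₀ hcne, mul_one, hd]
    let e := LinearEquiv.ofBijective (Vmap (ε := ε) f i) ⟨hinj i, hsurj⟩
    -- the inverse morphism
    set ψ := onePointFam (F := sharpP k (E i) (ε i)) (G := W) i e.symm.toLinearMap with hψ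
    set g := realize hidem hprim horth hcomplete ψ with hg
    refine ⟨g, ?_, ?_⟩
    · -- f ≫ g = 𝟙 W
      refine hom_ext hcomplete _ _ fun l => LinearMap.ext fun x => ?_
      rw [Vmap_comp]
      have hgl : Vmap (ε := ε) g l = ψ l := realize_spec hidem hprim horth hcomplete ψ l
      rw [hgl]
      by_cases hl : l = i
      · subst hl
        rw [hψ, onePointFam_same]
        show e.symm (e x) = _
        rw [e.symm_apply_apply]
        exact (Vmap_id l x).symm
      · rw [hψ, onePointFam_other _ _ hl]
        have : Vmap (ε := ε) f l x = 0 := vsharp_eq_zero horth hl _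
        have hx : x = 0 := hinj l (by rw [this, map_zero])
        rw [hx, map_zero]
        exact (Vmap_id (ε := ε) l 0).symm
    · -- g ≫ f = 𝟙 (sharp i)
      refine hom_ext hcomplete _ _ fun l => LinearMap.ext fun y => ?_
      rw [Vmap_comp]
      have hgl : Vmap (ε := ε) g l = ψ l := realize_spec hidem hprim horth hcomplete ψ l
      rw [hgl]
      by_cases hl : l = i
      · subst hl
        rw [hψ, onePointFam_same]
        show e (e.symm y) = _
        rw [e.apply_symm_apply]
        exact (Vmap_id l y).symm
      · rw [vsharp_eq_zero horth hl y, map_zero, map_zero]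
        exact (Vmap_id (ε := ε) l 0).symm

include hidem hprim horth in
lemma sharp_noniso {i j : ι}
    (h : Nonempty (sharpP k (E i) (ε i) ≅ sharpP k (E j) (ε j))) : i = j := by
  by_contra hij
  obtain ⟨e⟩ := h
  have h1 : Vmap (ε := ε) (e.hom ≫ e.inv) i (epsElt hidem i) = epsElt hidem i := by
    rw [e.hom_inv_id]
    exact Vmap_id _ _
  rw [Vmap_comp] at h1
  rw [vsharp_eq_zero horth hij (Vmap (ε := ε) e.hom i (epsElt hidem i)), map_zero] at h1
  exact eps_ne_zero' hidem hprim i h1.symm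

include hidem hprim horth hcomplete in
lemma exists_nonzero_v (F : DCat k C) (hF : Simple F) :
    ∃ (i : ι) (v : Vsub ε F i), v ≠ 0 := by
  by_contra hx
  push_neg at hx
  have hid : 𝟙 F = 0 := by
    refine zero_of_vmaps_zero hidem hprim horth hcomplete _ fun l => ?_
    exact LinearMap.ext fun x => by rw [hx l x]; simp
  have : IsIso (𝟙 F) := inferInstance
  exact ((Simple.mono_isIso_iff_nonzero (𝟙 F)).mp this) hid

include hidem hprim horth hcomplete in
lemma simple_is_sharp (F : DCat k C) (hF : Simple F) :
    ∃ i, Nonempty (F ≅ sharpP k (E i) (ε i)) := by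
  obtain ⟨i, v, hv⟩ := exists_nonzero_v hidem hprim horth hcomplete F hF
  have hne : sv i F v ≠ 0 := by
    intro h0
    apply hv
    have h1 := Vmap_sv hidem i F v
    rw [h0] at h1
    rw [← h1]
    exact Vmap_zero (ε := ε) i (epsElt hidem i)
  have hMono : Mono (sv i F v) := by
    refine mono_of_inj hcomplete _ fun l => ?_
    intro a b hab
    by_cases hl : l = i
    · subst hl
      obtain ⟨c, hc⟩ := vsharp_eq_smul hidem hprim l a
      obtain ⟨d, hd⟩ := vsharp_eq_smul hidem hprim l b
      rw [hc, hd, map_smul, map_smul, Vmap_sv] at hab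
      have : (c - d) • v = 0 := by rw [sub_smul, hab, sub_self]
      rcases smul_eq_zero.mp this with h | h
      · rw [hc, hd, sub_eq_zero.mp h]
      · exact absurd h hv
    · rw [vsharp_eq_zero horth hl a, vsharp_eq_zero horth hl b]
  have hIso : IsIso (sv i F v) := isIso_of_mono_of_nonzero hne
  exact ⟨i, ⟨(asIso (sv i F v)).symm⟩⟩

include hidem hprim horth hcomplete in
lemma schurian (F : DCat k C) (hF : Simple F) :
    Function.Bijective fun a : k => a • (𝟙 F) := by
  have hid_ne : 𝟙 F ≠ 0 :=
    (Simple.mono_isIso_iff_nonzero (𝟙 F)).mp inferInstance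
  constructor
  · intro a b hab
    by_contra hne
    have h1 : (a - b) • (𝟙 F) = 0 := by
      simp only at hab
      rw [sub_smul, hab, sub_self]
    have : 𝟙 F = 0 := by
      have := congrArg (fun t => (a - b)⁻¹ • t) h1
      simpa [smul_smul, inv_mul_cancel₀ (sub_ne_zero.mpr hne)] using this
    exact hid_ne this
  · intro u
    obtain ⟨i, ⟨e⟩⟩ := simple_is_sharp hidem hprim horth hcomplete F hF
    set u' := e.inv ≫ u ≫ e.hom with hu'
    obtain ⟨c, hc⟩ := vsharp_eq_smul hidem hprim i
      (Vmap (ε := ε) u' i (epsElt hidem i))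
    have hu'eq : u' = c • 𝟙 (sharpP k (E i) (ε i)) := by
      refine hom_ext hcomplete _ _ fun l => ?_
      by_cases hl : l = i
      · subst hl
        refine ext_eps hidem hprim _ _ ?_
        rw [hc]
        refine Subtype.ext ?_
        show _ = ((c • 𝟙 (sharpP k (E l) (ε l))).hom.app (op (E l)) (epsElt (ε := ε) hidem l).1)
        rw [dsmul_app]
        rfl
      · refine LinearMap.ext fun x => ?_
        rw [vsharp_eq_zero horth hl x, map_zero, map_zero]
    refine ⟨c, ?_⟩
    have : e.hom ≫ u' ≫ e.inv = u := by
      rw [hu']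
      simp
    rw [hu'eq] at this
    rw [← this]
    simp only [CategoryTheory.Linear.comp_smul, CategoryTheory.Linear.smul_comp,
      Category.comp_id, Category.id_comp, e.hom_inv_id]

end Aux6

section Aux7
variable {k : Type v} [Field k] {C : Type u} [Category.{v} C] [Preadditive C]
  [CategoryTheory.Linear k C] [∀ X Y : C, FiniteDimensional k (X ⟶ Y)]
variable {ι : Type} [Fintype ι] [DecidableEq ι] {E : ι → C} {ε : ∀ i, E i ⟶ E i}
variable (hidem : ∀ i, ε i ≫ ε i = ε i)
    (hprim : ∀ i, Module.finrank k (idemHom k (ε i) (ε i)) = 1)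
    (horth : ∀ i j, i ≠ j → idemHom k (ε i) (ε j) = ⊥)
    (hcomplete : ∀ A B : C, Function.Bijective (idemCompTotal k ι ε A B))

include hidem hprim horth hcomplete in
lemma semisimple (F : DCat k C) :
    ∃ (n : ℕ) (G : Fin n → DCat k C) (p : ∀ m, F ⟶ G m) (s : ∀ m, G m ⟶ F),
      (∀ m, Simple (G m)) ∧ (∀ m, s m ≫ p m = 𝟙 (G m)) ∧
      (∀ m l, m ≠ l → s m ≫ p l = 0) ∧ (∑ m, p m ≫ s m) = 𝟙 F := by
  classical
  haveI : ∀ i : ι, FiniteDimensional k (Vsub ε F i) := fun i => by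
    haveI := F.property.2.2 (op (E i))
    infer_instance
  set d : ι → ℕ := fun i => Module.finrank k (Vsub ε F i) with hd
  set b : ∀ i, Module.Basis (Fin (d i)) k (Vsub ε F i) := fun i => Module.finBasis k _ with hb
  set n := Fintype.card (Σ i : ι, Fin (d i)) with hn
  set eqv : Fin n ≃ (Σ i : ι, Fin (d i)) := (Fintype.equivFin (Σ i : ι, Fin (d i))).symm
    with heqv
  set sτ : ∀ τ : Σ i : ι, Fin (d i), (sharpP k (E τ.1) (ε τ.1) ⟶ F) :=
    fun τ => sv τ.1 F (b τ.1 τ.2) with hsτ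
  set coordMap : ∀ τ : Σ i : ι, Fin (d i),
      (Vsub ε F τ.1 →ₗ[k] Vsub ε (sharpP k (E τ.1) (ε τ.1)) τ.1) :=
    fun τ => (LinearMap.toSpanSingleton k _ (epsElt hidem τ.1)) ∘ₗ ((b τ.1).coord τ.2)
    with hcm
  set pτ : ∀ τ : Σ i : ι, Fin (d i), (F ⟶ sharpP k (E τ.1) (ε τ.1)) :=
    fun τ => realize hidem hprim horth hcomplete (onePointFam τ.1 (coordMap τ)) with hpτ
  have hVp : ∀ (τ : Σ i : ι, Fin (d i)) (l : ι),
      Vmap (ε := ε) (pτ τ) l = onePointFam τ.1 (coordMap τ) l :=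
    fun τ l => realize_spec hidem hprim horth hcomplete _ l
  have hVs : ∀ τ : Σ i : ι, Fin (d i),
      Vmap (ε := ε) (sτ τ) τ.1 (epsElt hidem τ.1) = b τ.1 τ.2 :=
    fun τ => Vmap_sv hidem _ _ _
  refine ⟨n, fun m => sharpP k (E (eqv m).1) (ε (eqv m).1), fun m => pτ (eqv m),
    fun m => sτ (eqv m), fun m => simple_sharp hidem hprim horth hcomplete _, ?_, ?_, ?_⟩
  · -- s ≫ p = 𝟙
    intro m
    refine hom_ext hcomplete _ _ fun l => ?_
    by_cases hl : l = (eqv m).1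
    · subst hl
      refine ext_eps hidem hprim _ _ ?_
      rw [Vmap_comp, hVs, hVp, onePointFam_same, Vmap_id]
      show LinearMap.toSpanSingleton k _ (epsElt hidem (eqv m).1)
        ((b (eqv m).1).coord (eqv m).2 ((b (eqv m).1) (eqv m).2)) = _
      rw [LinearMap.toSpanSingleton_apply, Module.Basis.coord_apply, Module.Basis.repr_self]
      simp
    · refine LinearMap.ext fun x => ?_
      rw [vsharp_eq_zero horth hl x, map_zero, map_zero]
  · -- s m ≫ p l = 0 for m ≠ l
    intro m l hml
    have hττ : eqv m ≠ eqv l := fun h => hml (eqv.injective h)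
    have key : ∀ τ υ : Σ i : ι, Fin (d i), τ ≠ υ → sτ τ ≫ pτ υ = 0 := by
      intro τ υ hne
      obtain ⟨i1, t1⟩ := τ
      obtain ⟨i2, t2⟩ := υ
      refine hom_ext hcomplete _ _ fun r => LinearMap.ext fun x => ?_
      rw [Vmap_comp, hVp]
      by_cases hr : r = i2
      · subst hr
        rw [onePointFam_same]
        by_cases hi : i1 = r
        · subst hi
          have ht : t1 ≠ t2 := fun h => hne (by rw [h])
          obtain ⟨c, hc⟩ := vsharp_eq_smul hidem hprim i1 x
          rw [hc, map_smul, map_smul, hVs ⟨i1, t1⟩]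
          have h2 : coordMap ⟨i1, t2⟩ (b i1 t1) = 0 := by
            show LinearMap.toSpanSingleton k _ (epsElt hidem i1)
              ((b i1).coord t2 ((b i1) t1)) = 0
            rw [Module.Basis.coord_apply, Module.Basis.repr_self_apply, if_neg ht, map_zero]
          rw [h2, smul_zero]
          exact (Vmap_zero (ε := ε) _ _).symm
        · rw [vsharp_eq_zero horth (fun h => hi h.symm) x, map_zero, map_zero]
          exact (Vmap_zero (ε := ε) _ _).symm
      · rw [onePointFam_other _ _ hr]
        rw [LinearMap.zero_apply]
        exact (Vmap_zero (ε := ε) r x).symm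
    exact key (eqv m) (eqv l) hττ
  · -- ∑ p ≫ s = 𝟙
    refine hom_ext hcomplete _ _ fun r => LinearMap.ext fun x => ?_
    rw [Vmap_sum, Vmap_id]
    calc (∑ m, Vmap (ε := ε) (pτ (eqv m) ≫ sτ (eqv m)) r x)
        = ∑ τ : Σ i : ι, Fin (d i), Vmap (ε := ε) (pτ τ ≫ sτ τ) r x :=
          Equiv.sum_comp eqv (fun τ => Vmap (ε := ε) (pτ τ ≫ sτ τ) r x)
      _ = ∑ i : ι, ∑ t : Fin (d i), Vmap (ε := ε) (pτ ⟨i, t⟩ ≫ sτ ⟨i, t⟩) r x := by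
          rw [← Finset.univ_sigma_univ, Finset.sum_sigma]
      _ = ∑ t : Fin (d r), Vmap (ε := ε) (pτ ⟨r, t⟩ ≫ sτ ⟨r, t⟩) r x := by
          refine Finset.sum_eq_single r (fun i _ hir => Finset.sum_eq_zero fun t _ => ?_)
            (fun h => absurd (Finset.mem_univ r) h)
          rw [Vmap_comp, hVp, onePointFam_other _ _ (Ne.symm hir), LinearMap.zero_apply,
            map_zero]
      _ = x := by
          have hterm : ∀ t : Fin (d r), Vmap (ε := ε) (pτ ⟨r, t⟩ ≫ sτ ⟨r, t⟩) r x
              = ((b r).repr x t) • (b r t) := by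
            intro t
            rw [Vmap_comp, hVp, onePointFam_same]
            show Vmap (ε := ε) (sτ ⟨r, t⟩) r
              (LinearMap.toSpanSingleton k _ (epsElt hidem r) ((b r).coord t x)) = _
            rw [LinearMap.toSpanSingleton_apply, map_smul, hVs ⟨r, t⟩, Module.Basis.coord_apply]
          rw [Finset.sum_congr rfl fun t _ => hterm t]
          exact Module.Basis.sum_repr (b r) x

end Aux7

/-- Let `C` be a `k`-linear category equipped with a finite complete set of
primitive orthogonal idempotents `ε i ∈ End(E i)`, `i ∈ ι`.  Then the category of `k`-linear
contravariant functors from `C` to finite-dimensional `k`-vector spaces is semisimple and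
Schurian, and the presheaves `(E i, ε i)^♯` form a complete set of simples in it. -/
theorem stmt_6 (k : Type v) [Field k] (C : Type u) [Category.{v} C] [Preadditive C]
    [CategoryTheory.Linear k C] [∀ X Y : C, FiniteDimensional k (X ⟶ Y)]
    -- the finite set `𝓘` of idempotents
    (ι : Type) [Fintype ι] [DecidableEq ι] (E : ι → C) (ε : ∀ i, E i ⟶ E i)
    (hidem : ∀ i, ε i ≫ ε i = ε i)
    -- primitive and orthogonal
    (hprim : ∀ i, Module.finrank k (idemHom k (ε i) (ε i)) = 1)
    (horth : ∀ i j, i ≠ j → idemHom k (ε i) (ε j) = ⊥)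
    -- complete
    (hcomplete : ∀ A B : C, Function.Bijective (idemCompTotal k ι ε A B)) :
    -- the `(E i, ε i)^♯` are pairwise non-isomorphic simple objects
    (∀ i, Simple (sharpP k (E i) (ε i))) ∧
    (∀ i j, Nonempty (sharpP k (E i) (ε i) ≅ sharpP k (E j) (ε j)) → i = j) ∧
    -- every simple object is isomorphic to one of them
    (∀ F : ObjectProperty.FullSubcategory (LinPresheaf k (C := C)),
      Simple F → ∃ i, Nonempty (F ≅ sharpP k (E i) (ε i))) ∧
    -- the category of representations is Schurian
    (∀ F : ObjectProperty.FullSubcategory (LinPresheaf k (C := C)),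
      Simple F → Function.Bijective fun a : k => a • (𝟙 F)) ∧
    -- and semisimple: every object is a finite direct sum of simple objects
    (∀ F : ObjectProperty.FullSubcategory (LinPresheaf k (C := C)),
      ∃ (n : ℕ) (G : Fin n → ObjectProperty.FullSubcategory (LinPresheaf k (C := C)))
        (p : ∀ m, F ⟶ G m) (s : ∀ m, G m ⟶ F),
        (∀ m, Simple (G m)) ∧
        (∀ m, s m ≫ p m = 𝟙 (G m)) ∧
        (∀ m l, m ≠ l → s m ≫ p l = 0) ∧
        (∑ m, p m ≫ s m) = 𝟙 F) := by
  exact ⟨fun i => simple_sharp hidem hprim horth hcomplete i,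
    fun i j h => sharp_noniso hidem hprim horth h,
    fun F hF => simple_is_sharp hidem hprim horth hcomplete F hF,
    fun F hF => schurian hidem hprim horth hcomplete F hF,
    fun F => semisimple hidem hprim horth hcomplete F⟩
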